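/- If the products AB and BC are both defined and the family {A_{*j}·b_{jk}·C_{k*} : j,k ∈ ℤ⁺} is summable (condition (D)), then A(BC) and (AB)C are both defined and A(BC) = (AB)C. -/

import Mathlib

open Set

def ProdDef {F : Type*} [Field F] (A B : ℕ → ℕ → F) : Prop :=
  ∀ i k, {j | A i j * B j k ≠ 0}.Finite

noncomputable def mmul {F : Type*} [Field F] (A B : ℕ → ℕ → F) : ℕ → ℕ → F :=
  fun i k => ∑ᶠ j, A i j * B j k

def RowFin {F : Type*} [Field F] (A : ℕ → ℕ → F) : Prop := ∀ i, {j | A i j ≠ 0}.Finite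

def ColFin {F : Type*} [Field F] (A : ℕ → ℕ → F) : Prop := ∀ j, {i | A i j ≠ 0}.Finite

/-- A family of vectors `V j`, summable iff each coordinate has finite support over `j`. -/
def Summab {F : Type*} [Field F] (V : ℕ → ℕ → F) : Prop := ∀ i, {j | V j i ≠ 0}.Finite

/-- Condition (D): the family of rank-one matrices `A_{*j} b_{jk} C_{k*}` is summable. -/
def CondD {F : Type*} [Field F] (A B C : ℕ → ℕ → F) : Prop :=
  ∀ i l, {p : ℕ × ℕ | A i p.1 * B p.1 p.2 * C p.2 l ≠ 0}.Finite

theorem stmt15 {F : Type*} [Field F] (A B C : ℕ → ℕ → F)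
    (hAB : ProdDef A B) (hBC : ProdDef B C) (hD : CondD A B C) :
    ProdDef A (mmul B C) ∧ ProdDef (mmul A B) C ∧
      mmul A (mmul B C) = mmul (mmul A B) C := by
  have h1 : ProdDef A (mmul B C) := by
    intro i l
    apply ((hD i l).image Prod.fst).subset
    intro j hj
    simp only [mem_setOf_eq, mmul] at hj
    have hA : A i j ≠ 0 := fun h => hj (by simp [h])
    have : (∑ᶠ k, B j k * C k l) ≠ 0 := fun h => hj (by simp [h])
    obtain ⟨k, hk⟩ : ∃ k, B j k * C k l ≠ 0 := by
      by_contra h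
      push_neg at h
      exact this (by simp [h])
    exact ⟨(j, k), by simpa [mul_assoc] using mul_ne_zero hA hk, rfl⟩
  have h2 : ProdDef (mmul A B) C := by
    intro i l
    apply ((hD i l).image Prod.snd).subset
    intro k hk
    simp only [mem_setOf_eq, mmul] at hk
    have hC : C k l ≠ 0 := fun h => hk (by simp [h])
    have : (∑ᶠ j, A i j * B j k) ≠ 0 := fun h => hk (by simp [h])
    obtain ⟨j, hj⟩ : ∃ j, A i j * B j k ≠ 0 := by
      by_contra h
      push_neg at h
      exact this (by simp [h])
    exact ⟨(j, k), mul_ne_zero hj hC, rfl⟩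
  refine ⟨h1, h2, ?_⟩
  funext i l
  have hsup : (Function.support fun p : ℕ × ℕ => A i p.1 * B p.1 p.2 * C p.2 l).Finite :=
    hD i l
  have hL : mmul A (mmul B C) i l = ∑ᶠ p : ℕ × ℕ, A i p.1 * B p.1 p.2 * C p.2 l := by
    rw [finsum_curry _ hsup]
    simp only [mmul]
    refine finsum_congr fun j => ?_
    rw [mul_finsum]
    exact finsum_congr fun k => (mul_assoc _ _ _).symm
  have hsup' : (Function.support fun p : ℕ × ℕ => A i p.2 * B p.2 p.1 * C p.1 l).Finite := by
    have := hsup.image Prod.swap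
    apply this.subset
    intro p hp
    exact ⟨p.swap, hp, by simp⟩
  have hR : mmul (mmul A B) C i l = ∑ᶠ p : ℕ × ℕ, A i p.2 * B p.2 p.1 * C p.1 l := by
    rw [finsum_curry _ hsup']
    simp only [mmul]
    refine finsum_congr fun k => ?_
    rw [finsum_mul]
  rw [hL, hR]
  exact (finsum_comp_equiv (Equiv.prodComm ℕ ℕ)).symm
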